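/- arXiv:2007.09618 — 2 statements merged into one kernel-verified Lean document; each statement's English description precedes it below -/
import Mathlib

section
/- Let G=(V,E) be an undirected graph and m: V → Z an integral vector with m̃(V) = |E|. Then G has an orientation whose in-degree vector equals m if and only if m̃(X) ≤ e_G(X) for every subset X ⊆ V. -/
open Finset

/-- Head of edge `e` under orientation `o` (an orientation picks, for each edge,
one of its two end-nodes as head). -/
def ohead {V E : Type*} (ends : E → V × V) (o : E → Bool) (e : E) : V :=
  if o e then (ends e).1 else (ends e).2

/-- Tail of edge `e` under orientation `o`. -/
def otail {V E : Type*} (ends : E → V × V) (o : E → Bool) (e : E) : V :=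
  if o e then (ends e).2 else (ends e).1

/-- In-degree of node `v` in the orientation `o` of the graph. -/
def indeg {V E : Type*} [Fintype E] [DecidableEq V] (ends : E → V × V) (o : E → Bool)
    (v : V) : ℕ :=
  (Finset.univ.filter fun e => ohead ends o e = v).card

/-- `e_G(X)`: number of edges with at least one end-node in `X`. -/
def eG {V E : Type*} [Fintype E] [DecidableEq V] (ends : E → V × V) (X : Finset V) : ℕ :=
  (Finset.univ.filter fun e => (ends e).1 ∈ X ∨ (ends e).2 ∈ X).card

/-- `i_G(X)`: number of edges induced by `X` (both end-nodes in `X`). -/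
def iG {V E : Type*} [Fintype E] [DecidableEq V] (ends : E → V × V) (X : Finset V) : ℕ :=
  (Finset.univ.filter fun e => (ends e).1 ∈ X ∧ (ends e).2 ∈ X).card

/-- `ρ_D(X)`: number of arcs entering `X` (head in `X`, tail outside). -/
def inCut {V E : Type*} [Fintype E] [DecidableEq V] (ends : E → V × V) (o : E → Bool)
    (X : Finset V) : ℕ :=
  (Finset.univ.filter fun e => ohead ends o e ∈ X ∧ otail ends o e ∉ X).card

/-- `d_G(X)`: number of edges with exactly one end-node in `X`. -/
def dG {V E : Type*} [Fintype E] [DecidableEq V] (ends : E → V × V) (X : Finset V) : ℕ :=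
  (Finset.univ.filter fun e =>
    ((ends e).1 ∈ X ∧ (ends e).2 ∉ X) ∨ ((ends e).2 ∈ X ∧ (ends e).1 ∉ X)).card

/-- `Reach ends o s t`: there is a directed path from `s` to `t` in the orientation `o`. -/
def Reach {V E : Type*} (ends : E → V × V) (o : E → Bool) : V → V → Prop :=
  Relation.ReflTransGen fun u v => ∃ e, otail ends o e = u ∧ ohead ends o e = v

/-- `IsDipath ends o s t P`: the list of edges `P` forms a directed walk from `s` to `t`. -/
def IsDipath {V E : Type*} (ends : E → V × V) (o : E → Bool) : V → V → List E → Prop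
  | s, t, [] => s = t
  | s, t, e :: P => otail ends o e = s ∧ IsDipath ends o (ohead ends o e) t P

/-- The components of `m` sorted in decreasing order. -/
def decSeq {V : Type*} [Fintype V] (m : V → ℕ) : List ℕ :=
  (Multiset.sort (Finset.univ.val.map m) (· ≤ ·)).reverse

/-- The components of `m` sorted in increasing order. -/
def incSeq {V : Type*} [Fintype V] (m : V → ℕ) : List ℕ :=
  Multiset.sort (Finset.univ.val.map m) (· ≤ ·)

section Helpers

variable {V E : Type*} [Fintype V] [Fintype E] [DecidableEq V] [DecidableEq E] (ends : E → V × V)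
set_option linter.unusedSectionVars false

lemma ohead_or (o : E → Bool) (e : E) :
    ohead ends o e = (ends e).1 ∨ ohead ends o e = (ends e).2 := by
  unfold ohead; split <;> simp

lemma head_tail_pair (o : E → Bool) (e : E) :
    ({ohead ends o e, otail ends o e} : Set V) = {(ends e).1, (ends e).2} := by
  unfold ohead otail; split <;> simp [Set.pair_comm]

lemma ohead_ne_otail (hloop : ∀ e, (ends e).1 ≠ (ends e).2) (o : E → Bool) (e : E) :
    ohead ends o e ≠ otail ends o e := by
  unfold ohead otail; split
  · exact hloop e
  · exact (hloop e).symm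

lemma sum_indeg_eq (o : E → Bool) (X : Finset V) :
    ∑ v ∈ X, indeg ends o v = (Finset.univ.filter fun e => ohead ends o e ∈ X).card := by
  rw [Finset.card_eq_sum_card_fiberwise (s := Finset.univ.filter fun e => ohead ends o e ∈ X) (f := ohead ends o) (t := X)
    (fun e he => (Finset.mem_filter.mp he).2)]
  refine Finset.sum_congr rfl fun v hv => ?_
  unfold indeg
  congr 1
  ext e
  simp only [Finset.mem_filter, Finset.mem_univ, true_and]
  aesop

lemma sum_indeg (o : E → Bool) : ∑ v, indeg ends o v = Fintype.card E := by
  rw [sum_indeg_eq]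
  rw [Finset.filter_true_of_mem (fun e _ => Finset.mem_univ (ohead ends o e))]
  rfl

lemma indeg_update (hloop : ∀ e, (ends e).1 ≠ (ends e).2) (o : E → Bool) (e : E) (v : V) :
    (indeg ends (Function.update o e (!o e)) v : ℤ)
      = indeg ends o v + (if v = otail ends o e then 1 else 0)
        - (if v = ohead ends o e then 1 else 0) := by
  have hcard : ∀ o' : E → Bool, (indeg ends o' v : ℤ)
      = ∑ e' : E, if ohead ends o' e' = v then (1 : ℤ) else 0 := by
    intro o'
    unfold indeg
    rw [Finset.card_filter]
    push_cast
    rfl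
  rw [hcard, hcard]
  rw [← Finset.add_sum_erase _ _ (Finset.mem_univ e),
      ← Finset.add_sum_erase (f := fun e' => if ohead ends o e' = v then (1:ℤ) else 0)
        _ (Finset.mem_univ e)]
  have hsame : ∑ e' ∈ Finset.univ.erase e,
      (if ohead ends (Function.update o e (!o e)) e' = v then (1:ℤ) else 0)
      = ∑ e' ∈ Finset.univ.erase e, (if ohead ends o e' = v then (1:ℤ) else 0) := by
    refine Finset.sum_congr rfl fun e' he' => ?_
    have hne : e' ≠ e := (Finset.mem_erase.mp he').1
    rw [show ohead ends (Function.update o e (!o e)) e' = ohead ends o e' by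
      unfold ohead; rw [Function.update_of_ne hne]]
  rw [hsame]
  have hflip : ohead ends (Function.update o e (!o e)) e = otail ends o e := by
    unfold ohead otail
    rw [Function.update_self]
    cases o e <;> simp
  rw [hflip]
  have h1 : (if otail ends o e = v then (1:ℤ) else 0) = if v = otail ends o e then 1 else 0 := by
    simp [eq_comm]
  have h2 : (if ohead ends o e = v then (1:ℤ) else 0) = if v = ohead ends o e then 1 else 0 := by
    simp [eq_comm]
  rw [h1, h2]
  ring

lemma dipath_congr (o o' : E → Bool) : ∀ (P : List E) (s t : V),
    (∀ e ∈ P, o' e = o e) → IsDipath ends o s t P → IsDipath ends o' s t P := by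
  intro P
  induction P with
  | nil => intro s t _ h; exact h
  | cons e P ih =>
    intro s t hagree h
    obtain ⟨h1, h2⟩ := h
    have he : o' e = o e := hagree e List.mem_cons_self
    have hh : ohead ends o' e = ohead ends o e := by unfold ohead; rw [he]
    have ht : otail ends o' e = otail ends o e := by unfold otail; rw [he]
    exact ⟨ht.trans h1, hh ▸ ih (ohead ends o e) t (fun e' he' => hagree e' (List.mem_cons_of_mem e he')) h2⟩

lemma augment (hloop : ∀ e, (ends e).1 ≠ (ends e).2) :
    ∀ (P : List E) (o : E → Bool) (s t : V), P.Nodup → IsDipath ends o s t P → s ≠ t →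
    ∃ o' : E → Bool, ∀ v, (indeg ends o' v : ℤ)
      = indeg ends o v + (if v = s then 1 else 0) - (if v = t then 1 else 0) := by
  intro P
  induction P with
  | nil => intro o s t _ h hst; exact absurd h hst
  | cons e P ih =>
    intro o s t hnd h hst
    obtain ⟨h1, h2⟩ := h
    set u := ohead ends o e with hu
    set o₁ := Function.update o e (!o e) with ho₁
    have hshift : ∀ v, (indeg ends o₁ v : ℤ)
        = indeg ends o v + (if v = s then 1 else 0) - (if v = u then 1 else 0) := by
      intro v
      rw [ho₁, indeg_update ends hloop o e v, h1]
    by_cases hut : u = t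
    · exact ⟨o₁, fun v => by rw [hshift v, hut]⟩
    · have henP : e ∉ P := (List.nodup_cons.mp hnd).1
      have hP : IsDipath ends o₁ u t P := by
        refine dipath_congr ends o o₁ P u t (fun e' he' => ?_) h2
        exact Function.update_of_ne (fun hee : e' = e => henP (hee ▸ he')) _ o
      obtain ⟨o₂, ho₂⟩ := ih o₁ u t (List.nodup_cons.mp hnd).2 hP hut
      refine ⟨o₂, fun v => ?_⟩
      rw [ho₂ v, hshift v]
      ring

lemma dipath_append (o : E → Bool) : ∀ (X Y : List E) (s w t : V),
    IsDipath ends o s w X → IsDipath ends o w t Y → IsDipath ends o s t (X ++ Y) := by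
  intro X
  induction X with
  | nil => intro Y s w t hX hY; cases hX; exact hY
  | cons e X ih =>
    intro Y s w t hX hY
    exact ⟨hX.1, ih Y _ w t hX.2 hY⟩

lemma dipath_append_iff (o : E → Bool) : ∀ (X Y : List E) (s t : V),
    IsDipath ends o s t (X ++ Y) → ∃ w, IsDipath ends o s w X ∧ IsDipath ends o w t Y := by
  intro X
  induction X with
  | nil => intro Y s t h; exact ⟨s, rfl, h⟩
  | cons e X ih =>
    intro Y s t h
    obtain ⟨w, hw1, hw2⟩ := ih Y _ t h.2
    exact ⟨w, ⟨h.1, hw1⟩, hw2⟩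

lemma reach_dipath (o : E → Bool) (s t : V) (h : Reach ends o s t) :
    ∃ P : List E, IsDipath ends o s t P := by
  induction h with
  | refl => exact ⟨[], rfl⟩
  | tail _ hstep ih =>
    obtain ⟨P, hP⟩ := ih
    obtain ⟨e, he1, he2⟩ := hstep
    refine ⟨P ++ [e], dipath_append ends o P [e] s _ _ hP ?_⟩
    exact ⟨he1, he2⟩

lemma dipath_nodup [DecidableEq E] (o : E → Bool) :
    ∀ (n : ℕ) (P : List E) (s t : V), P.length ≤ n → IsDipath ends o s t P →
    ∃ Q : List E, Q.Nodup ∧ IsDipath ends o s t Q := by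
  intro n
  induction n with
  | zero =>
    intro P s t hlen h
    rw [Nat.le_zero, List.length_eq_zero_iff] at hlen
    exact ⟨P, hlen ▸ List.nodup_nil, h⟩
  | succ n ih =>
    intro P s t hlen h
    by_cases hnd : P.Nodup
    · exact ⟨P, hnd, h⟩
    · rw [List.nodup_iff_sublist] at hnd
      push_neg at hnd
      obtain ⟨x, hx⟩ := hnd
      obtain ⟨r₁, r₂, hr, hxr, hsub⟩ := List.cons_sublist_iff.mp hx
      obtain ⟨A, B', hA⟩ := List.append_of_mem hxr
      have hxr₂ : x ∈ r₂ := List.mem_of_cons_sublist hsub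
      obtain ⟨B'', C, hB⟩ := List.append_of_mem hxr₂
      have hP : P = A ++ x :: ((B' ++ B'') ++ x :: C) := by
        rw [hr, hA, hB]; simp
      rw [hP] at h
      obtain ⟨w1, hw1, hw2⟩ := dipath_append_iff ends o A _ s t h
      obtain ⟨hxw, hw3⟩ := hw2
      obtain ⟨w2, hw4, hw5⟩ := dipath_append_iff ends o (B' ++ B'') _ _ t hw3
      obtain ⟨hxw2, hw6⟩ := hw5
      have hshort : IsDipath ends o s t (A ++ x :: C) := by
        refine dipath_append ends o A (x :: C) s w1 t hw1 ?_
        exact ⟨hxw, hw6⟩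
      refine ih (A ++ x :: C) s t ?_ hshort
      have : P.length ≤ n + 1 := hlen
      rw [hP] at this
      simp only [List.length_append, List.length_cons] at this ⊢
      omega

end Helpers

/-- **Orientation lemma.** `G` has an orientation with in-degree vector `m`
iff `m̃(X) ≤ e_G(X)` for every `X ⊆ V`. -/
theorem orientation_lemma {V E : Type*} [Fintype V] [Fintype E] [DecidableEq V]
    (ends : E → V × V) (hloop : ∀ e, (ends e).1 ≠ (ends e).2)
    (m : V → ℤ) (hm : ∑ v, m v = (Fintype.card E : ℤ)) :
    (∃ o : E → Bool, ∀ v, (indeg ends o v : ℤ) = m v) ↔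
      ∀ X : Finset V, ∑ v ∈ X, m v ≤ (eG ends X : ℤ) := by
  classical
  constructor
  · rintro ⟨o, ho⟩ X
    have h1 : ∑ v ∈ X, m v = ((∑ v ∈ X, indeg ends o v : ℕ) : ℤ) := by
      push_cast
      exact (Finset.sum_congr rfl fun v _ => (ho v).symm)
    rw [h1, sum_indeg_eq]
    have hsub : (Finset.univ.filter fun e => ohead ends o e ∈ X) ⊆
        (Finset.univ.filter fun e => (ends e).1 ∈ X ∨ (ends e).2 ∈ X) := by
      intro e he
      simp only [Finset.mem_filter, Finset.mem_univ, true_and] at he ⊢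
      rcases ohead_or ends o e with h | h
      · exact Or.inl (h ▸ he)
      · exact Or.inr (h ▸ he)
    exact_mod_cast Finset.card_le_card hsub
  · intro hyp
    suffices h : ∀ n (o : E → Bool), (∑ v, (m v - indeg ends o v).toNat) = n →
        ∃ o' : E → Bool, ∀ v, (indeg ends o' v : ℤ) = m v by
      exact h _ (fun _ => true) rfl
    intro n
    induction n using Nat.strong_induction_on with
    | _ n ih =>
      intro o hΦ
      have hE : ∑ v, ((indeg ends o v : ℤ)) = (Fintype.card E : ℤ) := by
        rw [← Nat.cast_sum, sum_indeg]
      by_cases h0 : ∀ v, m v ≤ (indeg ends o v : ℤ)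
      · refine ⟨o, fun v => ?_⟩
        have hsum : ∑ v, ((indeg ends o v : ℤ) - m v) = 0 := by
          rw [Finset.sum_sub_distrib, hm, hE, sub_self]
        have := (Finset.sum_eq_zero_iff_of_nonneg
          (fun v _ => sub_nonneg.mpr (h0 v))).mp hsum v (Finset.mem_univ v)
        linarith [sub_eq_zero.mp this]
      · push_neg at h0
        obtain ⟨s, hs⟩ := h0
        set R := Finset.univ.filter (fun v => Reach ends o s v) with hR
        have hsR : s ∈ R := Finset.mem_filter.mpr ⟨Finset.mem_univ s, Relation.ReflTransGen.refl⟩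
        have hclosed : ∀ e, otail ends o e ∈ R → ohead ends o e ∈ R := by
          intro e he
          exact Finset.mem_filter.mpr ⟨Finset.mem_univ _,
            (Finset.mem_filter.mp he).2.tail ⟨e, rfl, rfl⟩⟩
        have heG : eG ends R = ∑ v ∈ R, indeg ends o v := by
          rw [sum_indeg_eq]
          unfold eG
          congr 1
          apply Finset.filter_congr
          intro e _
          have hpair : ((ends e).1 ∈ R ∨ (ends e).2 ∈ R) ↔
              (ohead ends o e ∈ R ∨ otail ends o e ∈ R) := by
            unfold ohead otail
            by_cases hoe : o e <;> simp [hoe, or_comm]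
          rw [hpair]
          constructor
          · intro h
            exact h.elim id (hclosed e)
          · exact Or.inl
        have hex : ∃ t ∈ R, m t < (indeg ends o t : ℤ) := by
          by_contra hno
          push_neg at hno
          have hlt : ∑ v ∈ R, (indeg ends o v : ℤ) < ∑ v ∈ R, m v :=
            Finset.sum_lt_sum (fun v hv => hno v hv) ⟨s, hsR, hs⟩
          have h2 : ∑ v ∈ R, m v ≤ (eG ends R : ℤ) := hyp R
          have h3 : (eG ends R : ℤ) = ∑ v ∈ R, (indeg ends o v : ℤ) := by
            rw [heG]; push_cast; rfl
          linarith
        obtain ⟨t, htR, htm⟩ := hex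
        have hst : s ≠ t := by
          intro h
          rw [h] at hs
          linarith
        have hreach : Reach ends o s t := (Finset.mem_filter.mp htR).2
        obtain ⟨P, hP⟩ := reach_dipath ends o s t hreach
        obtain ⟨Q, hQnd, hQ⟩ := dipath_nodup ends o P.length P s t le_rfl hP
        obtain ⟨o', ho'⟩ := augment ends hloop Q o s t hQnd hQ hst
        have hdec : ∑ v, (m v - indeg ends o' v).toNat < n := by
          rw [← hΦ]
          apply Finset.sum_lt_sum
          · intro v _
            have h := ho' v
            rcases eq_or_ne v s with rfl | h1
            · rcases eq_or_ne v t with rfl | h2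
              · exact absurd rfl hst
              · rw [if_pos rfl, if_neg h2] at h
                omega
            · rcases eq_or_ne v t with rfl | h2
              · rw [if_neg h1, if_pos rfl] at h
                omega
              · rw [if_neg h1, if_neg h2] at h
                omega
          · refine ⟨s, Finset.mem_univ s, ?_⟩
            have h := ho' s
            rw [if_pos rfl, if_neg hst] at h
            have hs' := hs
            omega
        exact ih _ hdec o' rfl
end

section
/- Among orientations of an undirected graph G=(V,E), an orientation D is decreasingly minimal (with respect to in-degree vectors) if and only if D minimizes Σ_{v∈V} ρ_D(v)² over all orientations of G. -/
open Finset

namespace DecMinAux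

open Finset

variable {V E : Type*}

/-- number of edges `e` in the list `P` with `f e = w`. -/
def cnt [DecidableEq V] (f : E → V) (w : V) : List E → ℕ
  | [] => 0
  | e :: P => (if f e = w then 1 else 0) + cnt f w P

open Classical in
/-- flip the orientation on all edges in `P`. -/
noncomputable def oflip (P : List E) (o : E → Bool) : E → Bool :=
  fun e => if e ∈ P then !(o e) else o e

theorem cnt_congr [DecidableEq V] {f g : E → V} {w : V} :
    ∀ {P : List E}, (∀ e ∈ P, f e = g e) → cnt f w P = cnt g w P
  | [], _ => rfl
  | e :: P, h => by
    simp only [cnt, h e (by simp)]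
    rw [cnt_congr (fun x hx => h x (by simp [hx]))]

theorem cnt_eq_card [DecidableEq V] (f : E → V) (w : V) :
    ∀ (P : List E), P.Nodup → ∀ (S : Finset E), (∀ e, e ∈ S ↔ e ∈ P) →
      cnt f w P = (S.filter fun e => f e = w).card := by
  intro P
  induction P with
  | nil =>
    intro _ S hS
    have : S = ∅ := Finset.eq_empty_of_forall_notMem (by simp [hS])
    simp [cnt, this]
  | cons e P ih =>
    intro hnd S hS
    classical
    have heP : e ∉ P := (List.nodup_cons.1 hnd).1
    have hP : P.Nodup := (List.nodup_cons.1 hnd).2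
    have heS : e ∈ S := (hS e).2 (by simp)
    have hS' : ∀ x, x ∈ S.erase e ↔ x ∈ P := by
      intro x
      rw [Finset.mem_erase, hS]
      constructor
      · rintro ⟨hne, hx⟩
        rcases List.mem_cons.1 hx with rfl | hx
        · exact absurd rfl hne
        · exact hx
      · intro hx
        exact ⟨fun h => heP (h ▸ hx), List.mem_cons_of_mem _ hx⟩
    have hIH := ih hP (S.erase e) hS'
    rw [Finset.filter_erase] at hIH
    by_cases hfe : f e = w
    · have heF : e ∈ S.filter fun e => f e = w := Finset.mem_filter.2 ⟨heS, hfe⟩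
      have hcard := Finset.card_erase_of_mem heF
      have hpos : 1 ≤ (S.filter fun e => f e = w).card := Finset.card_pos.2 ⟨e, heF⟩
      simp only [cnt, hfe, if_pos]
      omega
    · have heF : e ∉ S.filter fun e => f e = w := by simp [hfe]
      rw [Finset.erase_eq_of_notMem heF] at hIH
      simp only [cnt, hfe, if_neg, not_false_iff]
      omega

theorem dipath_cnt [DecidableEq V] (ends : E → V × V) (o : E → Bool) :
    ∀ {P : List E} {x u : V}, IsDipath ends o x u P → ∀ w,
      cnt (otail ends o) w P + (if u = w then 1 else 0)
        = cnt (ohead ends o) w P + (if x = w then 1 else 0)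
  | [], x, u, h, w => by
    have hxu : x = u := h
    subst hxu; rfl
  | e :: P, x, u, h, w => by
    obtain ⟨he, hP⟩ := h
    have IH := dipath_cnt ends o hP w
    simp only [cnt, he]
    split_ifs at IH ⊢ <;> omega

theorem oflip_nil (o : E → Bool) : oflip [] o = o := by
  funext e; simp [oflip]

theorem oflip_apply_mem {P : List E} {e : E} (he : e ∈ P) (o : E → Bool) :
    oflip P o e = !(o e) := by simp [oflip, he]

theorem oflip_apply_not_mem {P : List E} {e : E} (he : e ∉ P) (o : E → Bool) :
    oflip P o e = o e := by simp [oflip, he]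

theorem ohead_not (ends : E → V × V) (o o' : E → Bool) {e : E} (h : o' e = !(o e)) :
    ohead ends o' e = otail ends o e := by
  cases hoe : o e <;> simp [ohead, otail, h, hoe]

theorem otail_not (ends : E → V × V) (o o' : E → Bool) {e : E} (h : o' e = !(o e)) :
    otail ends o' e = ohead ends o e := by
  cases hoe : o e <;> simp [ohead, otail, h, hoe]

theorem ohead_congr (ends : E → V × V) {o o' : E → Bool} {e : E} (h : o' e = o e) :
    ohead ends o' e = ohead ends o e := by simp [ohead, h]

theorem otail_congr (ends : E → V × V) {o o' : E → Bool} {e : E} (h : o' e = o e) :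
    otail ends o' e = otail ends o e := by simp [otail, h]

theorem oflip_cons {P : List E} {e : E} (he : e ∉ P) (o : E → Bool) :
    oflip (e :: P) o = oflip P (oflip [e] o) := by
  funext x
  by_cases hx : x = e
  · subst hx
    simp [oflip, he]
  · by_cases hxP : x ∈ P <;> simp [oflip, hx, hxP]

theorem indeg_flip_single [Fintype E] [DecidableEq V] (ends : E → V × V) (o : E → Bool)
    (e : E) (w : V) :
    indeg ends (oflip [e] o) w + (if ohead ends o e = w then 1 else 0)
      = indeg ends o w + (if otail ends o e = w then 1 else 0) := by
  classical
  have h2 : ohead ends (oflip [e] o) e = otail ends o e :=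
    ohead_not ends o _ (oflip_apply_mem (by simp) o)
  unfold indeg
  rw [Finset.card_filter, Finset.card_filter,
    ← Finset.sum_erase_add _ _ (Finset.mem_univ e),
    ← Finset.sum_erase_add _ _ (Finset.mem_univ e)]
  have h3 : ∑ x ∈ univ.erase e, (if ohead ends (oflip [e] o) x = w then 1 else 0)
      = ∑ x ∈ univ.erase e, (if ohead ends o x = w then 1 else 0) := by
    refine Finset.sum_congr rfl (fun x hx => ?_)
    have hxe : x ≠ e := (Finset.mem_erase.1 hx).1
    rw [ohead_congr ends (oflip_apply_not_mem (by simp [hxe]) o)]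
  rw [h3, h2]
  ring

theorem indeg_flip [Fintype E] [DecidableEq V] (ends : E → V × V) :
    ∀ (P : List E), P.Nodup → ∀ (o : E → Bool) (w : V),
      indeg ends (oflip P o) w + cnt (ohead ends o) w P
        = indeg ends o w + cnt (otail ends o) w P := by
  intro P
  induction P with
  | nil => intro _ o w; simp [cnt, oflip_nil]
  | cons e P ih =>
    intro hnd o w
    have heP : e ∉ P := (List.nodup_cons.1 hnd).1
    have hP : P.Nodup := (List.nodup_cons.1 hnd).2
    rw [oflip_cons heP]
    have IH := ih hP (oflip [e] o) w
    have hh : cnt (ohead ends (oflip [e] o)) w P = cnt (ohead ends o) w P :=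
      cnt_congr (fun x hx =>
        ohead_congr ends (oflip_apply_not_mem (by simp [show x ≠ e from fun h : x = e => heP (h ▸ hx)]) o))
    have ht : cnt (otail ends (oflip [e] o)) w P = cnt (otail ends o) w P :=
      cnt_congr (fun x hx =>
        otail_congr ends (oflip_apply_not_mem (by simp [show x ≠ e from fun h : x = e => heP (h ▸ hx)]) o))
    rw [hh, ht] at IH
    have hs := indeg_flip_single ends o e w
    simp only [cnt]
    omega

theorem sum_indeg [Fintype V] [Fintype E] [DecidableEq V] (ends : E → V × V) (o : E → Bool) :
    ∑ v, indeg ends o v = Fintype.card E := by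
  rw [← Finset.card_univ,
    Finset.card_eq_sum_card_fiberwise (f := fun e => ohead ends o e)
      (t := univ) (fun e _ => mem_univ _)]
  rfl

theorem indeg_diff [Fintype E] [DecidableEq V] (ends : E → V × V) (o o' : E → Bool) (w : V) :
    indeg ends o w + ((univ.filter fun e => ¬ o e = o' e).filter fun e => otail ends o e = w).card
      = indeg ends o' w
        + ((univ.filter fun e => ¬ o e = o' e).filter fun e => ohead ends o e = w).card := by
  classical
  unfold indeg
  rw [Finset.filter_filter, Finset.filter_filter, Finset.card_filter, Finset.card_filter,
    Finset.card_filter, Finset.card_filter, ← Finset.sum_add_distrib, ← Finset.sum_add_distrib]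
  refine Finset.sum_congr rfl (fun e _ => ?_)
  by_cases hoo : o e = o' e
  · have hh : ohead ends o' e = ohead ends o e := ohead_congr ends hoo.symm
    simp [hoo, hh]
  · have hnot : o' e = !(o e) := by
      cases h1 : o e <;> cases h2 : o' e <;> simp_all
    have hh : ohead ends o' e = otail ends o e := ohead_not ends o o' hnot
    simp only [hoo, not_false_iff, true_and, hh]
    split_ifs <;> omega

end DecMinAux
namespace DecMinAux

open Finset

variable {V E : Type*}

theorem stuck [Fintype E] [DecidableEq V] (ends : E → V × V) (o o' : E → Bool) (u : V)
    (hu : indeg ends o' u < indeg ends o u) (R : Finset E)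
    (x : V) (P : List E) (hnd : P.Nodup) (hdip : IsDipath ends o x u P)
    (hPR : ∀ e ∈ P, e ∉ R) (hcov : ∀ e, ¬ o e = o' e → (e ∈ R ∨ e ∈ P))
    (hPd : ∀ e ∈ P, ¬ o e = o' e)
    (hex : ∀ e ∈ R, ohead ends o e ≠ x) :
    ∃ v, indeg ends o v < indeg ends o' v ∧
      ∃ Q : List E, Q.Nodup ∧ IsDipath ends o v u Q ∧ ∀ e ∈ Q, ¬ o e = o' e := by
  classical
  set D : Finset E := univ.filter fun e => ¬ o e = o' e with hD
  set S₀ : Finset E := univ.filter fun e => e ∈ P with hS₀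
  have hS₀m : ∀ e, e ∈ S₀ ↔ e ∈ P := by intro e; simp [hS₀]
  have hsub : S₀ ⊆ D := by
    intro e he
    rw [hS₀m] at he
    simp [hD, hPd e he]
  have h1 : D.filter (fun e => ohead ends o e = x) = S₀.filter (fun e => ohead ends o e = x) := by
    ext e
    simp only [Finset.mem_filter, hD, hS₀, Finset.mem_univ, true_and]
    constructor
    · rintro ⟨hne, hx⟩
      rcases hcov e hne with hR | hP
      · exact absurd hx (hex e hR)
      · exact ⟨hP, hx⟩
    · rintro ⟨hP, hx⟩
      exact ⟨hPd e hP, hx⟩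
  have hcH : cnt (ohead ends o) x P = (S₀.filter fun e => ohead ends o e = x).card :=
    cnt_eq_card _ _ P hnd S₀ hS₀m
  have hcT : cnt (otail ends o) x P = (S₀.filter fun e => otail ends o e = x).card :=
    cnt_eq_card _ _ P hnd S₀ hS₀m
  have hsubc : (S₀.filter fun e => otail ends o e = x).card
      ≤ (D.filter fun e => otail ends o e = x).card :=
    Finset.card_le_card (Finset.filter_subset_filter _ hsub)
  have hTEL := dipath_cnt ends o hdip x
  have hdiff := indeg_diff ends o o' x
  rw [← hD] at hdiff
  by_cases hxu : x = u
  · subst hxu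
    simp only [if_pos rfl] at hTEL
    exfalso
    rw [h1, ← hcH] at hdiff
    omega
  · have : ¬ (u = x) := fun h => hxu h.symm
    rw [if_neg this, if_pos rfl] at hTEL
    refine ⟨x, ?_, P, hnd, hdip, hPd⟩
    rw [h1, ← hcH] at hdiff
    omega

theorem build [Fintype E] [DecidableEq V] (ends : E → V × V) (o o' : E → Bool) (u : V)
    (hu : indeg ends o' u < indeg ends o u) :
    ∀ (n : ℕ) (R : Finset E), R.card ≤ n → (∀ e ∈ R, ¬ o e = o' e) →
    ∀ (x : V) (P : List E), P.Nodup → IsDipath ends o x u P →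
      (∀ e ∈ P, e ∉ R) → (∀ e, ¬ o e = o' e → (e ∈ R ∨ e ∈ P)) → (∀ e ∈ P, ¬ o e = o' e) →
      ∃ v, indeg ends o v < indeg ends o' v ∧
        ∃ Q : List E, Q.Nodup ∧ IsDipath ends o v u Q ∧ ∀ e ∈ Q, ¬ o e = o' e := by
  intro n
  induction n with
  | zero =>
    intro R hR hRd x P hnd hdip hPR hcov hPd
    have hRe : R = ∅ := Finset.card_eq_zero.1 (Nat.le_zero.1 hR)
    exact stuck ends o o' u hu R x P hnd hdip hPR hcov hPd (by simp [hRe])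
  | succ n ih =>
    intro R hR hRd x P hnd hdip hPR hcov hPd
    classical
    by_cases hex : ∃ e ∈ R, ohead ends o e = x
    · obtain ⟨e, heR, hhe⟩ := hex
      have hcard : (R.erase e).card ≤ n := by
        have := Finset.card_erase_of_mem heR
        have : 1 ≤ R.card := Finset.card_pos.2 ⟨e, heR⟩
        have := Finset.card_erase_of_mem heR
        omega
      have heP : e ∉ P := fun h => hPR e h heR
      refine ih (R.erase e) hcard (fun f hf => hRd f (Finset.mem_of_mem_erase hf))
        (otail ends o e) (e :: P)
        (List.nodup_cons.2 ⟨heP, hnd⟩) ⟨rfl, hhe ▸ hdip⟩ ?_ ?_ ?_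
      · intro f hf
        rcases List.mem_cons.1 hf with rfl | hf
        · exact Finset.notMem_erase _ _
        · exact fun h => hPR f hf (Finset.mem_of_mem_erase h)
      · intro f hf
        rcases hcov f hf with hfR | hfP
        · by_cases hfe : f = e
          · exact Or.inr (by simp [hfe])
          · exact Or.inl (Finset.mem_erase.2 ⟨hfe, hfR⟩)
        · exact Or.inr (List.mem_cons_of_mem _ hfP)
      · intro f hf
        rcases List.mem_cons.1 hf with rfl | hf
        · exact hRd f heR
        · exact hPd f hf
    · push_neg at hex
      exact stuck ends o o' u hu R x P hnd hdip hPR hcov hPd hex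

end DecMinAux
namespace DecMinAux

open Finset

variable {V E : Type*}

theorem exchange [Fintype E] [DecidableEq V] (ends : E → V × V) (o o' : E → Bool) (u : V)
    (hu : indeg ends o' u < indeg ends o u) :
    ∃ v, indeg ends o v < indeg ends o' v ∧
      ∃ o₁ o₁' : E → Bool,
        (∀ w, indeg ends o₁ w + (if u = w then 1 else 0)
            = indeg ends o w + (if v = w then 1 else 0)) ∧
        (∀ w, indeg ends o₁' w + (if v = w then 1 else 0)
            = indeg ends o' w + (if u = w then 1 else 0)) := by
  classical
  obtain ⟨v, hv, Q, hnd, hdip, hQd⟩ :=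
    build ends o o' u hu (univ.filter fun e => ¬ o e = o' e).card
      (univ.filter fun e => ¬ o e = o' e) le_rfl (by intro e he; simpa using he)
      u [] (by simp) rfl (by simp) (fun e he => Or.inl (by simpa using he)) (by simp)
  refine ⟨v, hv, oflip Q o, oflip Q o', ?_, ?_⟩
  · intro w
    have h1 := indeg_flip ends Q hnd o w
    have h2 := dipath_cnt ends o hdip w
    omega
  · intro w
    have h1 := indeg_flip ends Q hnd o' w
    have h2 := dipath_cnt ends o hdip w
    have hnotf : ∀ e ∈ Q, o' e = !(o e) := by
      intro e he
      have hne := hQd e he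
      cases hb : o e <;> cases hb' : o' e <;> simp_all
    have hh : cnt (ohead ends o') w Q = cnt (otail ends o) w Q :=
      cnt_congr (fun e he => ohead_not ends o o' (hnotf e he))
    have ht : cnt (otail ends o') w Q = cnt (ohead ends o) w Q :=
      cnt_congr (fun e he => otail_not ends o o' (hnotf e he))
    rw [hh, ht] at h1
    omega

end DecMinAux
namespace DecMinAux

open Finset

variable {V E : Type*}

/-- components of a multiset sorted decreasingly. -/
def L (s : Multiset ℕ) : List ℕ := (Multiset.sort s (· ≤ ·)).reverse

theorem decSeq_eq_L [Fintype V] (m : V → ℕ) : decSeq m = L (univ.val.map m) := rfl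

theorem L_coe (s : Multiset ℕ) : (L s : Multiset ℕ) = s := by
  unfold L
  rw [Multiset.coe_eq_coe.2 (List.reverse_perm _), Multiset.sort_eq]

theorem L_sorted (s : Multiset ℕ) : (L s).Pairwise (fun a b : ℕ => b ≤ a) := by
  unfold L
  rw [List.pairwise_reverse]
  exact Multiset.pairwise_sort s _

theorem L_mem {x : ℕ} {s : Multiset ℕ} : x ∈ L s ↔ x ∈ s := by
  unfold L
  rw [List.mem_reverse, Multiset.mem_sort]

instance : IsAntisymm ℕ (fun a b : ℕ => b ≤ a) := ⟨fun a b h1 h2 => le_antisymm h2 h1⟩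

theorem L_max {s : Multiset ℕ} {c : ℕ} (hc : c ∈ s) (hmax : ∀ x ∈ s, x ≤ c) :
    L s = c :: L (s.erase c) := by
  refine (fun hp hs => List.Perm.eq_of_pairwise' (r := fun a b : ℕ => b ≤ a) (L_sorted s) hs hp) ?_ ?_
  · rw [← Multiset.coe_eq_coe]
    show (L s : Multiset ℕ) = (↑(c :: L (s.erase c)) : Multiset ℕ)
    rw [L_coe, show (↑(c :: L (s.erase c)) : Multiset ℕ) = c ::ₘ ↑(L (s.erase c)) from rfl,
      L_coe, Multiset.cons_erase hc]
  · rw [List.pairwise_cons]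
    exact ⟨fun b hb => hmax b (Multiset.mem_of_mem_erase (L_mem.1 hb)), L_sorted _⟩

theorem exists_max {s : Multiset ℕ} (hs : s ≠ 0) : ∃ c ∈ s, ∀ x ∈ s, x ≤ c := by
  induction s using Multiset.induction_on with
  | empty => exact absurd rfl hs
  | cons a t ih =>
    rcases eq_or_ne t 0 with rfl | ht
    · exact ⟨a, by simp, by simp⟩
    · obtain ⟨c, hc, hm⟩ := ih ht
      rcases le_total a c with h | h
      · refine ⟨c, Multiset.mem_cons_of_mem hc, fun x hx => ?_⟩
        rcases Multiset.mem_cons.1 hx with rfl | hx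
        · exact h
        · exact hm x hx
      · refine ⟨a, Multiset.mem_cons_self _ _, fun x hx => ?_⟩
        rcases Multiset.mem_cons.1 hx with rfl | hx
        · exact le_rfl
        · exact le_trans (hm x hx) h

theorem erase_cons_mem {t : Multiset ℕ} {c : ℕ} (x : ℕ) (hc : c ∈ t) :
    (x ::ₘ t).erase c = x ::ₘ t.erase c := by
  conv_lhs => rw [← Multiset.cons_erase hc]
  rw [Multiset.cons_swap, Multiset.erase_cons_head]

theorem KL_top {t : Multiset ℕ} {a b : ℕ} (h : ∀ c ∈ t, c < a) (hba : b + 1 < a) :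
    L ((b+1) ::ₘ (a-1) ::ₘ t) ≤ L (a ::ₘ b ::ₘ t) := by
  have hA0 : ((b+1) ::ₘ (a-1) ::ₘ t) ≠ 0 := by
    intro hcon
    exact Multiset.cons_ne_zero hcon
  obtain ⟨c, hcA, hcm⟩ := exists_max hA0
  have hca : c < a := by
    rcases Multiset.mem_cons.1 hcA with rfl | h2
    · omega
    · rcases Multiset.mem_cons.1 h2 with rfl | h3
      · omega
      · exact h c h3
  have hmaxB : ∀ x ∈ a ::ₘ b ::ₘ t, x ≤ a := by
    intro x hx
    rcases Multiset.mem_cons.1 hx with rfl | hx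
    · exact le_rfl
    · rcases Multiset.mem_cons.1 hx with rfl | hx
      · omega
      · exact le_of_lt (h x hx)
  rw [L_max hcA hcm, L_max (Multiset.mem_cons_self a _) hmaxB]
  exact le_of_lt (List.Lex.rel hca)

theorem KL (n : ℕ) : ∀ (t : Multiset ℕ), Multiset.card t ≤ n → ∀ a b : ℕ, b + 1 ≤ a →
    L ((b+1) ::ₘ (a-1) ::ₘ t) ≤ L (a ::ₘ b ::ₘ t) := by
  induction n with
  | zero =>
    intro t ht a b hba
    rcases eq_or_lt_of_le hba with heq | hlt
    · refine le_of_eq ?_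
      rw [heq, show a - 1 = b by omega, Multiset.cons_swap]
    · refine KL_top (fun c hc => ?_) hlt
      rw [Multiset.card_eq_zero.1 (Nat.le_zero.1 ht)] at hc
      exact absurd hc (Multiset.notMem_zero c)
  | succ n ih =>
    intro t ht a b hba
    rcases eq_or_lt_of_le hba with heq | hlt
    · refine le_of_eq ?_
      rw [heq, show a - 1 = b by omega, Multiset.cons_swap]
    · by_cases hbig : ∃ c ∈ t, a ≤ c
      · have ht0 : t ≠ 0 := by
          rcases hbig with ⟨c, hc, _⟩
          exact fun hcon => absurd (hcon ▸ hc) (Multiset.notMem_zero c)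
        obtain ⟨c, hct, hcm⟩ := exists_max ht0
        have hac : a ≤ c := by
          obtain ⟨c', hc', ha'⟩ := hbig
          exact le_trans ha' (hcm c' hc')
        have hmaxA : ∀ x ∈ (b+1) ::ₘ (a-1) ::ₘ t, x ≤ c := by
          intro x hx
          rcases Multiset.mem_cons.1 hx with rfl | hx
          · omega
          · rcases Multiset.mem_cons.1 hx with rfl | hx
            · omega
            · exact hcm x hx
        have hmaxB : ∀ x ∈ a ::ₘ b ::ₘ t, x ≤ c := by
          intro x hx
          rcases Multiset.mem_cons.1 hx with rfl | hx
          · exact hac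
          · rcases Multiset.mem_cons.1 hx with rfl | hx
            · omega
            · exact hcm x hx
        have hcA : c ∈ (b+1) ::ₘ (a-1) ::ₘ t :=
          Multiset.mem_cons_of_mem (Multiset.mem_cons_of_mem hct)
        have hcB : c ∈ a ::ₘ b ::ₘ t :=
          Multiset.mem_cons_of_mem (Multiset.mem_cons_of_mem hct)
        rw [L_max hcA hmaxA, L_max hcB hmaxB,
          erase_cons_mem _ (Multiset.mem_cons_of_mem hct), erase_cons_mem _ hct,
          erase_cons_mem _ (Multiset.mem_cons_of_mem hct), erase_cons_mem _ hct]
        refine List.cons_le_cons c (ih (t.erase c) ?_ a b hba)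
        have hce := Multiset.card_erase_of_mem hct
        rw [Nat.pred_eq_sub_one] at hce
        have h1 : 0 < Multiset.card t := Multiset.card_pos.2 ht0
        omega
      · push_neg at hbig
        exact KL_top hbig hlt

end DecMinAux
namespace DecMinAux

open Finset

variable {V E : Type*}

theorem sum2 [Fintype V] [DecidableEq V] (f : V → ℕ) {u v : V} (huv : u ≠ v) :
    ∑ w, f w = f u + f v + ∑ w ∈ (univ.erase u).erase v, f w := by
  rw [← Finset.sum_erase_add _ _ (Finset.mem_univ u),
    ← Finset.sum_erase_add _ _ (Finset.mem_erase.2 ⟨Ne.symm huv, Finset.mem_univ v⟩)]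
  ring

theorem msplit [Fintype V] [DecidableEq V] {u v : V} (huv : u ≠ v) (f : V → ℕ) :
    univ.val.map f = f u ::ₘ f v ::ₘ ((univ.erase u).erase v).val.map f := by
  have h1 : (univ : Finset V).val = u ::ₘ (univ.erase u).val := by
    rw [Finset.erase_val]
    exact (Multiset.cons_erase (Finset.mem_def.1 (Finset.mem_univ u))).symm
  have h2 : (univ.erase u).val = v ::ₘ ((univ.erase u).erase v).val := by
    rw [Finset.erase_val ((univ : Finset V).erase u)]
    exact (Multiset.cons_erase
      (Finset.mem_def.1 (Finset.mem_erase.2 ⟨Ne.symm huv, Finset.mem_univ v⟩))).symm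
  rw [h1, Multiset.map_cons, h2, Multiset.map_cons]

theorem sum_sq_of_map_eq [Fintype V] {f g : V → ℕ}
    (h : univ.val.map f = univ.val.map g) : ∑ v, f v ^ 2 = ∑ v, g v ^ 2 := by
  have h1 : ∑ v, f v ^ 2 = ((univ.val.map f).map (fun x => x ^ 2)).sum := by
    rw [Finset.sum_eq_multiset_sum, Multiset.map_map]
    rfl
  have h2 : ∑ v, g v ^ 2 = ((univ.val.map g).map (fun x => x ^ 2)).sum := by
    rw [Finset.sum_eq_multiset_sum, Multiset.map_map]
    rfl
  rw [h1, h2, h]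

theorem sqmin_decmin [Fintype V] [Fintype E] [DecidableEq V] (ends : E → V × V) (o : E → Bool)
    (hsq : ∀ o'' : E → Bool, ∑ v, (indeg ends o v) ^ 2 ≤ ∑ v, (indeg ends o'' v) ^ 2) :
    ∀ o' : E → Bool, decSeq (indeg ends o) ≤ decSeq (indeg ends o') := by
  suffices H : ∀ n (o' : E → Bool),
      (∑ w, ((indeg ends o w - indeg ends o' w) + (indeg ends o' w - indeg ends o w))) ≤ n →
      decSeq (indeg ends o) ≤ decSeq (indeg ends o') by
    exact fun o' => H _ o' le_rfl
  intro n
  induction n with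
  | zero =>
    intro o' h
    have heq : ∀ w, indeg ends o w = indeg ends o' w := by
      intro w
      have := Finset.sum_eq_zero_iff.1 (Nat.le_zero.1 h) w (mem_univ w)
      omega
    rw [funext heq]
  | succ n ih =>
    intro o' hd
    classical
    by_cases heq : ∀ w, indeg ends o w = indeg ends o' w
    · rw [funext heq]
    · push_neg at heq
      obtain ⟨w₀, hw₀⟩ := heq
      have hsum : ∑ v, indeg ends o v = ∑ v, indeg ends o' v := by
        rw [sum_indeg, sum_indeg]
      have hexu : ∃ u, indeg ends o' u < indeg ends o u := by
        by_contra hc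
        push_neg at hc
        have := Finset.sum_lt_sum (fun i (_ : i ∈ univ) => hc i)
          ⟨w₀, mem_univ w₀, lt_of_le_of_ne (hc w₀) hw₀⟩
        omega
      obtain ⟨u, hu⟩ := hexu
      obtain ⟨v, hv, o₁, o₁', h₁, h₁'⟩ := exchange ends o o' u hu
      have huv : u ≠ v := by
        intro h
        rw [h] at hu
        omega
      have hu1 : indeg ends o₁ u + 1 = indeg ends o u := by
        have h := h₁ u
        rw [if_pos rfl, if_neg (fun hh : v = u => huv hh.symm)] at h
        omega
      have hv1 : indeg ends o₁ v = indeg ends o v + 1 := by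
        have h := h₁ v
        rw [if_pos rfl, if_neg huv] at h
        omega
      -- sum of squares identity for the exchange on `o`
      have hsq1 : ∑ x, (indeg ends o₁ x) ^ 2 + 2 * indeg ends o u
          = ∑ x, (indeg ends o x) ^ 2 + 2 * indeg ends o v + 2 := by
        rw [sum2 (fun x => (indeg ends o₁ x) ^ 2) huv, sum2 (fun x => (indeg ends o x) ^ 2) huv]
        have hrest : ∑ x ∈ (univ.erase u).erase v, (indeg ends o₁ x) ^ 2
            = ∑ x ∈ (univ.erase u).erase v, (indeg ends o x) ^ 2 := by
          refine Finset.sum_congr rfl (fun x hx => ?_)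
          have hxv : x ≠ v := (Finset.mem_erase.1 hx).1
          have hxu : x ≠ u := (Finset.mem_erase.1 (Finset.mem_of_mem_erase hx)).1
          have h := h₁ x
          rw [if_neg (fun hh : u = x => hxu hh.symm),
            if_neg (fun hh : v = x => hxv hh.symm)] at h
          rw [show indeg ends o₁ x = indeg ends o x by omega]
        rw [hrest, ← hu1, hv1]
        ring
      have hkey : indeg ends o u ≤ indeg ends o v + 1 := by
        have hphi := hsq o₁
        omega
      have hba : indeg ends o' u + 1 ≤ indeg ends o' v := by omega
      have h1'u : indeg ends o₁' u = indeg ends o' u + 1 := by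
        have h := h₁' u
        rw [if_pos rfl, if_neg (fun hh : v = u => huv hh.symm)] at h
        omega
      have h1'v : indeg ends o₁' v + 1 = indeg ends o' v := by
        have h := h₁' v
        rw [if_pos rfl, if_neg huv] at h
        omega
      have hrest2 : ((univ.erase u).erase v).val.map (indeg ends o₁')
          = ((univ.erase u).erase v).val.map (indeg ends o') := by
        refine Multiset.map_congr rfl (fun x hx => ?_)
        rw [Finset.mem_val] at hx
        have hxv : x ≠ v := (Finset.mem_erase.1 hx).1
        have hxu : x ≠ u := (Finset.mem_erase.1 (Finset.mem_of_mem_erase hx)).1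
        have h := h₁' x
        rw [if_neg (fun hh : u = x => hxu hh.symm),
          if_neg (fun hh : v = x => hxv hh.symm)] at h
        omega
      have hKL : decSeq (indeg ends o₁') ≤ decSeq (indeg ends o') := by
        rw [decSeq_eq_L, decSeq_eq_L, msplit huv (indeg ends o₁'), msplit huv (indeg ends o'),
          hrest2, h1'u, show indeg ends o₁' v = indeg ends o' v - 1 by omega]
        conv_rhs => rw [Multiset.cons_swap]
        exact KL _ _ le_rfl (indeg ends o' v) (indeg ends o' u) hba
      have hdist : (∑ w, ((indeg ends o w - indeg ends o₁' w)
          + (indeg ends o₁' w - indeg ends o w))) ≤ n := by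
        rw [sum2 (fun w => (indeg ends o w - indeg ends o' w)
          + (indeg ends o' w - indeg ends o w)) huv] at hd
        rw [sum2 (fun w => (indeg ends o w - indeg ends o₁' w)
          + (indeg ends o₁' w - indeg ends o w)) huv]
        have hrest3 : ∑ x ∈ (univ.erase u).erase v,
            ((indeg ends o x - indeg ends o₁' x) + (indeg ends o₁' x - indeg ends o x))
            = ∑ x ∈ (univ.erase u).erase v,
            ((indeg ends o x - indeg ends o' x) + (indeg ends o' x - indeg ends o x)) := by
          refine Finset.sum_congr rfl (fun x hx => ?_)
          have hxv : x ≠ v := (Finset.mem_erase.1 hx).1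
          have hxu : x ≠ u := (Finset.mem_erase.1 (Finset.mem_of_mem_erase hx)).1
          have h := h₁' x
          rw [if_neg (fun hh : u = x => hxu hh.symm),
            if_neg (fun hh : v = x => hxv hh.symm)] at h
          omega
        rw [hrest3]
        omega
      exact le_trans (ih o₁' hdist) hKL

end DecMinAux
/-- An orientation `D` of `G` is decreasingly minimal (w.r.t. in-degree
vectors) iff it minimizes the sum of squared in-degrees over all orientations. -/
theorem decmin_iff_squaresum_minimizer {V E : Type*} [Fintype V] [Fintype E] [DecidableEq V]
    (ends : E → V × V) (hloop : ∀ e, (ends e).1 ≠ (ends e).2) (o : E → Bool) :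
    (∀ o' : E → Bool, decSeq (indeg ends o) ≤ decSeq (indeg ends o')) ↔
      (∀ o' : E → Bool, ∑ v, (indeg ends o v) ^ 2 ≤ ∑ v, (indeg ends o' v) ^ 2) := by
  constructor
  · intro hdm
    have hne : Nonempty (E → Bool) := ⟨fun _ => true⟩
    obtain ⟨ob, hob⟩ := Finite.exists_min (fun oo : E → Bool => ∑ v, (indeg ends oo v) ^ 2)
    have hdb := DecMinAux.sqmin_decmin ends ob hob
    have heq : decSeq (indeg ends o) = decSeq (indeg ends ob) :=
      le_antisymm (hdm ob) (hdb o)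
    have hms : Finset.univ.val.map (indeg ends o) = Finset.univ.val.map (indeg ends ob) := by
      calc Finset.univ.val.map (indeg ends o)
          = ((decSeq (indeg ends o) : List ℕ) : Multiset ℕ) := (DecMinAux.L_coe _).symm
        _ = ((decSeq (indeg ends ob) : List ℕ) : Multiset ℕ) := by rw [heq]
        _ = Finset.univ.val.map (indeg ends ob) := DecMinAux.L_coe _
    intro o'
    rw [DecMinAux.sum_sq_of_map_eq hms]
    exact hob o'
  · intro hsq
    exact DecMinAux.sqmin_decmin ends o hsq
end
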